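/- Let H be a topological group, X a topological H-space, and suppose H acts transitively on X with H/K countable for some compact open subgroup K of H, and H, X are locally compact Hausdorff. Then for any x ∈ X the orbit map h ↦ h·x induces a homeomorphism H/H_x ≅ X, where H_x is the stabilizer of x. In particular, for two closed subgroups I, J of H with H = IJ, the inclusion induces a homeomorphism I/(I∩J) ≅ H/J. -/

import Mathlib

open MulAction Set Pointwise

/-- A topological group covered by countably many cosets of a compact subgroup is
σ-compact. -/
lemma aux_sigmaCompact {H : Type*} [Group H] [TopologicalSpace H]
    [IsTopologicalGroup H] (K : Subgroup H) (hKc : IsCompact (K : Set H))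
    (hcount : Countable (H ⧸ K)) : SigmaCompactSpace H := by
  rw [← isSigmaCompact_univ_iff]
  have : (univ : Set H) = ⋃ q : H ⧸ K, (Quotient.out q) • (K : Set H) := by
    apply (eq_univ_iff_forall).2 ?_ |>.symm
    intro h
    refine mem_iUnion.2 ⟨QuotientGroup.mk h, ?_⟩
    rw [mem_smul_set_iff_inv_smul_mem]
    have : (QuotientGroup.mk (Quotient.out (QuotientGroup.mk h : H ⧸ K)) : H ⧸ K)
        = QuotientGroup.mk h := Quotient.out_eq' _
    exact (QuotientGroup.eq).1 this
  rw [this]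
  exact isSigmaCompact_iUnion_of_isCompact _ fun q => hKc.smul _

/-- Arens' theorem, core version: the orbit map of a transitive continuous action of a
σ-compact group on a Baire T2 space induces a homeomorphism from the quotient by the
stabilizer. -/
lemma aux_orbitHomeo {G X : Type*} [Group G] [TopologicalSpace G] [IsTopologicalGroup G]
    [SigmaCompactSpace G] [TopologicalSpace X] [BaireSpace X] [T2Space X]
    [MulAction G X] [ContinuousSMul G X] [MulAction.IsPretransitive G X] (x : X) :
    ∃ e : (G ⧸ MulAction.stabilizer G x) ≃ₜ X, ∀ g : G, e (QuotientGroup.mk g) = g • x := by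
  set φ : G ⧸ MulAction.stabilizer G x → X := MulAction.ofQuotientStabilizer G x with hφ
  have hφmk : ∀ g : G, φ (QuotientGroup.mk g) = g • x := fun g => rfl
  have hcont : Continuous φ := by
    rw [(QuotientGroup.isQuotientMap_mk _).continuous_iff]
    exact continuous_id.smul continuous_const
  have hinj : Function.Injective φ := MulAction.injective_ofQuotientStabilizer G x
  have hsurj : Function.Surjective φ := fun y => by
    obtain ⟨g, rfl⟩ := MulAction.exists_smul_eq G x y
    exact ⟨QuotientGroup.mk g, hφmk g⟩
  have hopen : IsOpenMap φ := by
    intro U hU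
    have himg : φ '' U = (fun g : G => g • x) '' (QuotientGroup.mk ⁻¹' U) := by
      ext y
      constructor
      · rintro ⟨q, hq, rfl⟩
        obtain ⟨g, rfl⟩ := QuotientGroup.mk_surjective q
        exact ⟨g, hq, rfl⟩
      · rintro ⟨g, hg, rfl⟩
        exact ⟨QuotientGroup.mk g, hg, rfl⟩
    rw [himg]
    exact isOpenMap_smul_of_sigmaCompact x _ (hU.preimage QuotientGroup.continuous_mk)
  exact ⟨Equiv.toHomeomorphOfContinuousOpen (Equiv.ofBijective φ ⟨hinj, hsurj⟩)
    hcont hopen, hφmk⟩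

/-- The quotient of a topological group by a closed subgroup is Hausdorff. -/
lemma aux_t2_quotient {G : Type*} [Group G] [TopologicalSpace G] [IsTopologicalGroup G]
    (J : Subgroup G) (hJ : IsClosed (J : Set G)) : T2Space (G ⧸ J) := by
  constructor
  intro p q hpq
  induction p using QuotientGroup.induction_on with | H a =>
  induction q using QuotientGroup.induction_on with | H b =>
  have hab : a⁻¹ * b ∉ (J : Set G) := fun h => hpq (QuotientGroup.eq.2 h)
  -- find product neighborhoods of (1,1) mapped away from J
  have hcont : Continuous (fun vw : G × G => vw.1⁻¹ * (a⁻¹ * b) * vw.2) := by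
    fun_prop
  have hmem : (fun vw : G × G => vw.1⁻¹ * (a⁻¹ * b) * vw.2) ⁻¹' ((J : Set G)ᶜ)
      ∈ nhds ((1 : G), (1 : G)) := by
    apply hcont.continuousAt.preimage_mem_nhds
    simp only [inv_one, one_mul, mul_one]
    exact hJ.isOpen_compl.mem_nhds hab
  rw [nhds_prod_eq, Filter.mem_prod_iff] at hmem
  obtain ⟨U, hU, V, hV, hUV⟩ := hmem
  obtain ⟨U₀, hU₀U, hU₀open, hU₀1⟩ := mem_nhds_iff.1 hU
  obtain ⟨V₀, hV₀V, hV₀open, hV₀1⟩ := mem_nhds_iff.1 hV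
  refine ⟨QuotientGroup.mk '' (a • U₀), QuotientGroup.mk '' (b • V₀),
    QuotientGroup.isOpenMap_coe _ (hU₀open.smul a),
    QuotientGroup.isOpenMap_coe _ (hV₀open.smul b),
    ⟨a • (1 : G), smul_mem_smul_set hU₀1, by simp⟩,
    ⟨b • (1 : G), smul_mem_smul_set hV₀1, by simp⟩, ?_⟩
  rw [Set.disjoint_left]
  rintro z ⟨y, ⟨u, hu, rfl⟩, rfl⟩ ⟨y', ⟨w, hw, rfl⟩, hzw⟩
  have : (a • u)⁻¹ * (b • w) ∈ J := QuotientGroup.eq.1 hzw.symm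
  have h2 : u⁻¹ * (a⁻¹ * b) * w ∈ J := by
    have heq : (a • u)⁻¹ * (b • w) = u⁻¹ * (a⁻¹ * b) * w := by
      simp only [smul_eq_mul]; group
    rwa [heq] at this
  exact hUV (Set.mk_mem_prod (hU₀U hu) (hV₀V hw)) h2

theorem stmt16 {H X : Type*} [Group H] [TopologicalSpace H] [IsTopologicalGroup H]
    [LocallyCompactSpace H] [T2Space H]
    [TopologicalSpace X] [LocallyCompactSpace X] [T2Space X]
    [MulAction H X] [ContinuousSMul H X] [MulAction.IsPretransitive H X]
    (K : Subgroup H) (hKc : IsCompact (K : Set H)) (hKo : IsOpen (K : Set H))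
    (hcount : Countable (H ⧸ K)) :
    (∀ x : X, ∃ e : (H ⧸ MulAction.stabilizer H x) ≃ₜ X,
      ∀ h : H, e (QuotientGroup.mk h) = h • x) ∧
    (∀ I J : Subgroup H, IsClosed (I : Set H) → IsClosed (J : Set H) →
      (∀ h : H, ∃ i ∈ I, ∃ j ∈ J, h = i * j) →
      ∃ e : (I ⧸ J.subgroupOf I) ≃ₜ (H ⧸ J),
        ∀ i : I, e (QuotientGroup.mk i) = QuotientGroup.mk (i : H)) := by
  haveI : SigmaCompactSpace H := aux_sigmaCompact K hKc hcount
  constructor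
  · exact fun x => aux_orbitHomeo x
  · intro I J hI hJ hIJ
    haveI : SigmaCompactSpace I := hI.sigmaCompactSpace
    haveI : T2Space (H ⧸ J) := aux_t2_quotient J hJ
    haveI : ContinuousSMul I (H ⧸ J) :=
      Topology.IsInducing.id.continuousSMul continuous_subtype_val rfl
    haveI : MulAction.IsPretransitive I (H ⧸ J) := by
      constructor
      intro p q
      induction p using QuotientGroup.induction_on with | H a =>
      induction q using QuotientGroup.induction_on with | H b =>
      obtain ⟨i₀, hi₀, j₀, hj₀, ha⟩ := hIJ a
      obtain ⟨i₁, hi₁, j₁, hj₁, hb⟩ := hIJ b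
      refine ⟨⟨i₁ * i₀⁻¹, I.mul_mem hi₁ (I.inv_mem hi₀)⟩, ?_⟩
      show QuotientGroup.mk ((i₁ * i₀⁻¹ : H) • a) = QuotientGroup.mk b
      apply QuotientGroup.eq.2
      have : ((i₁ * i₀⁻¹ * a) : H)⁻¹ * b = j₀⁻¹ * j₁ := by
        subst ha hb; group
      rw [smul_eq_mul, this]
      exact J.mul_mem (J.inv_mem hj₀) hj₁
    obtain ⟨e, he⟩ := aux_orbitHomeo (G := I) (QuotientGroup.mk (1 : H) : H ⧸ J)
    have hstab : MulAction.stabilizer I (QuotientGroup.mk (1 : H) : H ⧸ J)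
        = J.subgroupOf I := by
      ext i
      simp only [MulAction.mem_stabilizer_iff, Subgroup.mem_subgroupOf]
      show QuotientGroup.mk ((i : H) • (1 : H)) = QuotientGroup.mk (1 : H) ↔ (i : H) ∈ J
      rw [smul_eq_mul, mul_one]
      constructor
      · intro h
        simpa using QuotientGroup.eq.1 h
      · intro h
        exact QuotientGroup.eq.2 (by simpa using h)
    rw [← hstab]
    refine ⟨e, fun i => ?_⟩
    rw [he i]
    show QuotientGroup.mk ((i : H) • (1 : H)) = QuotientGroup.mk (i : H)
    rw [smul_eq_mul, mul_one]
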